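/- For all integers k ≥ 2 and n ≥ 1, S_k(n, 0, 0) = S_{k−1}(n, 0, 0) + Σ_{j=0}^{n−k} w(k, j+1, n−k−j) · S_{k−1}(j, 0, n−j) · S_k(n−k−j, k+j, 0), where the sum is empty if n < k. -/

import Mathlib

/-- The weighted sum `S_K(n,a,b)` over all compositions of `n` with parts in `{1,…,K}`:
each composition `c = (c_1,…,c_m)` with partial sums `p_0 = 0`, `p_j = c_1 + ⋯ + c_j`
contributes `∏_{j=1}^m w(c_j, a + p_{j-1} + 1, b + n - p_j)`. -/
def weightedSum {R : Type*} [CommRing R] (w : ℕ → ℕ → ℕ → R) (K n a b : ℕ) : R :=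
  ∑ c ∈ Finset.univ.filter (fun c : Composition n => ∀ i ∈ c.blocks, i ≤ K),
    ∏ j ∈ Finset.range c.length,
      w (c.blocks.getD j 0) (a + c.sizeUpTo j + 1) (b + n - c.sizeUpTo (j + 1))

section Aux

variable {R : Type*} [CommRing R] (w : ℕ → ℕ → ℕ → R)

/-- Weight of a list of tiles, with offsets `a` (cells before) and `b` (cells after). -/
def wtAux : ℕ → ℕ → List ℕ → R
  | _, _, [] => 1
  | a, b, i :: l => w i (a + 1) (b + l.sum) * wtAux (a + i) b l

lemma wtAux_append (a b : ℕ) (l₁ l₂ : List ℕ) :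
    wtAux w a b (l₁ ++ l₂) = wtAux w a (b + l₂.sum) l₁ * wtAux w (a + l₁.sum) b l₂ := by
  induction l₁ generalizing a with
  | nil => simp [wtAux]
  | cons i t ih =>
      simp only [List.cons_append, wtAux, ih (a + i), List.append_eq, List.sum_append,
        List.sum_cons]
      rw [show b + (t.sum + l₂.sum) = b + l₂.sum + t.sum by omega,
        show a + i + t.sum = a + (i + t.sum) by omega, mul_assoc]

lemma prod_eq_wtAux (l : List ℕ) (a b : ℕ) :
    (∏ j ∈ Finset.range l.length,
      w (l.getD j 0) (a + (l.take j).sum + 1) (b + l.sum - (l.take (j + 1)).sum))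
      = wtAux w a b l := by
  induction l generalizing a b with
  | nil => simp [wtAux]
  | cons i t ih =>
    rw [List.length_cons, Finset.prod_range_succ']
    have h1 : ∀ j ∈ Finset.range t.length,
        w ((i :: t).getD (j + 1) 0) (a + ((i :: t).take (j + 1)).sum + 1)
          (b + (i :: t).sum - ((i :: t).take (j + 1 + 1)).sum)
        = w (t.getD j 0) ((a + i) + (t.take j).sum + 1) (b + t.sum - (t.take (j + 1)).sum) := by
      intro j _
      simp only [List.getD_cons_succ, List.take_succ_cons, List.sum_cons]
      congr 1
      · omega
      · omega
    rw [Finset.prod_congr rfl h1, ih]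
    have h2 : b + (i :: t).sum - ((i :: t).take 1).sum = b + t.sum := by
      rw [show ((i :: t).take 1) = [i] from rfl]
      simp only [List.sum_cons, List.sum_nil]
      omega
    simp only [wtAux, List.getD_cons_zero, List.take_zero, List.sum_nil, add_zero, h2]
    ring

lemma weightedSum_eq_sum_wtAux (K n a b : ℕ) :
    weightedSum w K n a b
      = ∑ c ∈ Finset.univ.filter (fun c : Composition n => ∀ i ∈ c.blocks, i ≤ K),
          wtAux w a b c.blocks := by
  unfold weightedSum
  refine Finset.sum_congr rfl fun c _ => ?_
  rw [← prod_eq_wtAux w c.blocks a b, c.blocks_sum]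
  rfl

end Aux

section Maps

/-- Join two compositions with a block `k` in between. -/
def compJoin (k n j : ℕ) (hn : 0 < n) (c₁ : Composition j) (c₂ : Composition (n - k - j)) :
    Composition n :=
  if h : 0 < k ∧ j + (k + (n - k - j)) = n then
    { blocks := c₁.blocks ++ k :: c₂.blocks
      blocks_pos := by
        intro i hi
        rcases List.mem_append.1 hi with h1 | h2
        · exact c₁.blocks_pos h1
        · rcases List.mem_cons.1 h2 with rfl | h3
          · exact h.1
          · exact c₂.blocks_pos h3
      blocks_sum := by
        rw [List.sum_append, List.sum_cons, c₁.blocks_sum, c₂.blocks_sum]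
        exact h.2 }
  else Composition.single n hn

/-- First part of the split of a composition at the first block of size `k`. -/
def compSplit₁ (k n j : ℕ) (c : Composition n) : Composition j :=
  if h : (c.blocks.takeWhile (fun i => i < k)).sum = j then
    { blocks := c.blocks.takeWhile (fun i => i < k)
      blocks_pos := fun hi => c.blocks_pos (List.takeWhile_subset _ hi)
      blocks_sum := h }
  else Composition.ones j

/-- Second part of the split of a composition at the first block of size `k`. -/
def compSplit₂ (k n j : ℕ) (c : Composition n) : Composition (n - k - j) :=
  if h : ((c.blocks.dropWhile (fun i => i < k)).tail).sum = n - k - j then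
    { blocks := (c.blocks.dropWhile (fun i => i < k)).tail
      blocks_pos := fun hi =>
        c.blocks_pos (List.dropWhile_subset _ (List.mem_of_mem_tail hi))
      blocks_sum := h }
  else Composition.ones (n - k - j)

lemma compJoin_blocks (k n j : ℕ) (hn : 0 < n) (c₁ : Composition j)
    (c₂ : Composition (n - k - j)) (h : 0 < k ∧ j + (k + (n - k - j)) = n) :
    (compJoin k n j hn c₁ c₂).blocks = c₁.blocks ++ k :: c₂.blocks := by
  rw [compJoin, dif_pos h]

lemma compSplit₁_blocks (k n j : ℕ) (c : Composition n)
    (h : (c.blocks.takeWhile (fun i => i < k)).sum = j) :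
    (compSplit₁ k n j c).blocks = c.blocks.takeWhile (fun i => i < k) := by
  rw [compSplit₁, dif_pos h]

lemma compSplit₂_blocks (k n j : ℕ) (c : Composition n)
    (h : ((c.blocks.dropWhile (fun i => i < k)).tail).sum = n - k - j) :
    (compSplit₂ k n j c).blocks = (c.blocks.dropWhile (fun i => i < k)).tail := by
  rw [compSplit₂, dif_pos h]

lemma comp_ext {n : ℕ} {c₁ c₂ : Composition n} (h : c₁.blocks = c₂.blocks) : c₁ = c₂ :=
  Composition.ext h

/-- Key decomposition: a composition bounded by `k` containing a block `k`
decomposes at the first block equal to `k`. -/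
lemma blocks_decomp {n k : ℕ} (hk : 0 < k) (c : Composition n)
    (hle : ∀ i ∈ c.blocks, i ≤ k) (hmem : k ∈ c.blocks) :
    c.blocks = c.blocks.takeWhile (fun i => i < k)
      ++ k :: (c.blocks.dropWhile (fun i => i < k)).tail := by
  have hne : c.blocks.dropWhile (fun i => i < k) ≠ [] := by
    intro h
    have h1 := List.takeWhile_append_dropWhile (p := fun i => decide (i < k)) (l := c.blocks)
    rw [h, List.append_nil] at h1
    rw [← h1] at hmem
    have := List.mem_takeWhile_imp hmem
    simp at this
  have hh : (c.blocks.dropWhile (fun i => i < k)).head hne = k := by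
    have h2 := List.head_dropWhile_not (fun i => decide (i < k)) hne
    have h3 : (c.blocks.dropWhile (fun i => i < k)).head hne ∈ c.blocks :=
      List.dropWhile_subset _ (List.head_mem hne)
    have h4 := hle _ h3
    simp at h2
    omega
  conv_lhs => rw [← List.takeWhile_append_dropWhile (p := fun i => decide (i < k)) (l := c.blocks)]
  rw [← List.cons_head_tail hne, hh]
  rfl

/-- Package of facts about a composition in `A \ B` with fiber value `j`. -/
lemma key_facts {n k j : ℕ} (hk : 2 ≤ k) (c : Composition n)
    (hA : ∀ i ∈ c.blocks, i ≤ k) (hnB : ¬ ∀ i ∈ c.blocks, i ≤ k - 1)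
    (hg : (c.blocks.takeWhile (fun i => i < k)).sum = j) :
    c.blocks = c.blocks.takeWhile (fun i => i < k)
        ++ k :: (c.blocks.dropWhile (fun i => i < k)).tail
      ∧ ((c.blocks.dropWhile (fun i => i < k)).tail).sum = n - k - j
      ∧ k + j ≤ n := by
  push_neg at hnB
  obtain ⟨i, hi, hi'⟩ := hnB
  have hik : i = k := by have := hA i hi; omega
  subst hik
  have hd := blocks_decomp (by omega) c hA hi
  have hs : c.blocks.sum = n := c.blocks_sum
  rw [hd] at hs
  rw [List.sum_append, List.sum_cons, hg] at hs
  exact ⟨hd, by omega, by omega⟩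

end Maps

/-- For all integers `k ≥ 2` and `n ≥ 1`,
`S_k(n,0,0) = S_{k-1}(n,0,0)
  + Σ_{j=0}^{n-k} w(k, j+1, n-k-j) · S_{k-1}(j, 0, n-j) · S_k(n-k-j, k+j, 0)`,
where the sum is empty if `n < k`. -/
theorem weightedSum_remove_largest_tile {R : Type*} [CommRing R] (w : ℕ → ℕ → ℕ → R)
    (k : ℕ) (hk : 2 ≤ k) (n : ℕ) (hn : 1 ≤ n) :
    weightedSum w k n 0 0
      = weightedSum w (k - 1) n 0 0 +
        ∑ j ∈ Finset.range (n + 1 - k),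
          w k (j + 1) (n - k - j) * weightedSum w (k - 1) j 0 (n - j) *
            weightedSum w k (n - k - j) (k + j) 0 := by
  classical
  have hn0 : 0 < n := hn
  simp only [weightedSum_eq_sum_wtAux]
  set A := Finset.univ.filter (fun c : Composition n => ∀ i ∈ c.blocks, i ≤ k) with hA
  set B := Finset.univ.filter (fun c : Composition n => ∀ i ∈ c.blocks, i ≤ k - 1) with hB
  have hBA : B ⊆ A := by
    intro c hc
    simp only [hA, hB, Finset.mem_filter, Finset.mem_univ, true_and] at *
    intro i hi
    have := hc i hi
    omega
  rw [← Finset.sum_sdiff hBA, add_comm]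
  congr 1
  -- fiberwise decomposition
  have hmaps : ∀ c ∈ A \ B, (c.blocks.takeWhile (fun i => i < k)).sum ∈
      Finset.range (n + 1 - k) := by
    intro c hc
    rw [Finset.mem_sdiff] at hc
    obtain ⟨hcA, hcB⟩ := hc
    simp only [hA, hB, Finset.mem_filter, Finset.mem_univ, true_and] at hcA hcB
    obtain ⟨_, _, h3⟩ := key_facts hk c hcA hcB rfl
    rw [Finset.mem_range]
    omega
  rw [← Finset.sum_fiberwise_of_maps_to hmaps]
  refine Finset.sum_congr rfl fun j hj => ?_
  have hjn : k + j ≤ n := by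
    rw [Finset.mem_range] at hj; omega
  rw [mul_assoc, Finset.sum_mul_sum]
  simp only [Finset.mul_sum]
  rw [← Finset.sum_product']
  refine Finset.sum_nbij' (fun c => (compSplit₁ k n j c, compSplit₂ k n j c))
    (fun x => compJoin k n j hn0 x.1 x.2) ?_ ?_ ?_ ?_ ?_
  · -- maps into the product set
    intro c hc
    simp only [Finset.mem_filter, Finset.mem_sdiff, hA, hB, Finset.mem_univ, true_and] at hc
    obtain ⟨⟨hcA, hcB⟩, hg⟩ := hc
    obtain ⟨hd, hs2, h3⟩ := key_facts hk c hcA hcB hg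
    rw [Finset.mem_product]
    constructor
    · simp only [Finset.mem_filter, Finset.mem_univ, true_and]
      intro i hi
      rw [compSplit₁_blocks k n j c hg] at hi
      have := List.mem_takeWhile_imp hi
      simp at this
      omega
    · simp only [Finset.mem_filter, Finset.mem_univ, true_and]
      intro i hi
      rw [compSplit₂_blocks k n j c hs2] at hi
      exact hcA i (List.dropWhile_subset _ (List.mem_of_mem_tail hi))
  · -- inverse maps into the fiber set
    rintro ⟨c₁, c₂⟩ hx
    rw [Finset.mem_product] at hx
    obtain ⟨h1, h2⟩ := hx
    simp only [Finset.mem_filter, Finset.mem_univ, true_and] at h1 h2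
    have hcond : 0 < k ∧ j + (k + (n - k - j)) = n := ⟨by omega, by omega⟩
    have hbl := compJoin_blocks k n j hn0 c₁ c₂ hcond
    have hall : ∀ x ∈ c₁.blocks, (fun i => decide (i < k)) x = true := by
      intro x hx
      have := h1 x hx
      have := c₁.blocks_pos hx
      simp
      omega
    have htw : ((compJoin k n j hn0 c₁ c₂).blocks.takeWhile (fun i => i < k))
        = c₁.blocks := by
      rw [hbl, List.takeWhile_append_of_pos hall, List.takeWhile_cons_of_neg (by simp),
        List.append_nil]
    simp only [Finset.mem_filter, Finset.mem_sdiff, hA, hB, Finset.mem_univ, true_and]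
    refine ⟨⟨?_, ?_⟩, ?_⟩
    · intro i hi
      rw [hbl] at hi
      rcases List.mem_append.1 hi with h | h
      · have := h1 i h; omega
      · rcases List.mem_cons.1 h with rfl | h
        · exact le_refl _
        · exact h2 i h
    · intro hcon
      have hkmem : k ∈ (compJoin k n j hn0 c₁ c₂).blocks := by
        rw [hbl]
        exact List.mem_append.2 (Or.inr List.mem_cons_self)
      have := hcon k hkmem
      omega
    · rw [htw, c₁.blocks_sum]
  · -- left inverse
    intro c hc
    simp only [Finset.mem_filter, Finset.mem_sdiff, hA, hB, Finset.mem_univ, true_and] at hc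
    obtain ⟨⟨hcA, hcB⟩, hg⟩ := hc
    obtain ⟨hd, hs2, h3⟩ := key_facts hk c hcA hcB hg
    refine comp_ext ?_
    rw [compJoin_blocks k n j hn0 _ _ ⟨by omega, by omega⟩,
      compSplit₁_blocks k n j c hg, compSplit₂_blocks k n j c hs2]
    exact hd.symm
  · -- right inverse
    rintro ⟨c₁, c₂⟩ hx
    rw [Finset.mem_product] at hx
    obtain ⟨h1, h2⟩ := hx
    simp only [Finset.mem_filter, Finset.mem_univ, true_and] at h1 h2
    have hcond : 0 < k ∧ j + (k + (n - k - j)) = n := ⟨by omega, by omega⟩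
    have hbl := compJoin_blocks k n j hn0 c₁ c₂ hcond
    have hall : ∀ x ∈ c₁.blocks, (fun i => decide (i < k)) x = true := by
      intro x hx
      have := h1 x hx
      have := c₁.blocks_pos hx
      simp
      omega
    have htw : ((compJoin k n j hn0 c₁ c₂).blocks.takeWhile (fun i => i < k))
        = c₁.blocks := by
      rw [hbl, List.takeWhile_append_of_pos hall, List.takeWhile_cons_of_neg (by simp),
        List.append_nil]
    have hdw : ((compJoin k n j hn0 c₁ c₂).blocks.dropWhile (fun i => i < k))
        = k :: c₂.blocks := by
      rw [hbl, List.dropWhile_append_of_pos hall, List.dropWhile_cons_of_neg (by simp)]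
    have e1 : compSplit₁ k n j (compJoin k n j hn0 c₁ c₂) = c₁ := by
      refine comp_ext ?_
      rw [compSplit₁_blocks k n j _ (by rw [htw]; exact c₁.blocks_sum), htw]
    have e2 : compSplit₂ k n j (compJoin k n j hn0 c₁ c₂) = c₂ := by
      refine comp_ext ?_
      rw [compSplit₂_blocks k n j _ (by rw [hdw]; simpa using c₂.blocks_sum), hdw]
      rfl
    simp only [e1, e2]
  · -- values agree
    intro c hc
    simp only [Finset.mem_filter, Finset.mem_sdiff, hA, hB, Finset.mem_univ, true_and] at hc
    obtain ⟨⟨hcA, hcB⟩, hg⟩ := hc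
    obtain ⟨hd, hs2, h3⟩ := key_facts hk c hcA hcB hg
    rw [compSplit₁_blocks k n j c hg, compSplit₂_blocks k n j c hs2]
    conv_lhs => rw [hd]
    rw [wtAux_append]
    set l₁ := c.blocks.takeWhile (fun i => i < k)
    set l₂ := (c.blocks.dropWhile (fun i => i < k)).tail
    have e1 : (0 : ℕ) + (k :: l₂).sum = 0 + (n - j) := by
      rw [List.sum_cons, hs2]; omega
    rw [e1, hg]
    show wtAux w 0 (0 + (n - j)) l₁ * wtAux w (0 + j) 0 (k :: l₂) = _
    rw [show (0 : ℕ) + j = j from by omega]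
    show wtAux w 0 (0 + (n - j)) l₁ * (w k (j + 1) (0 + l₂.sum) * wtAux w (j + k) 0 l₂) = _
    rw [hs2, show (0 : ℕ) + (n - k - j) = n - k - j from by omega,
      show j + k = k + j from by omega, show (0:ℕ) + (n - j) = 0 + (n - j) from rfl]
    ring_nf
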